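/- Subject expansion: if t is closed, t →wh u, and ⊢ u : A is derivable in the tree type system, then ⊢ t : A is derivable. -/

import Mathlib

/-! # Tree intersection types -/

mutual
/-- Linear types: `A ::= ⋆ | T → A`. -/
inductive LinTy : Type where
  | star : LinTy
  | arr : TreeTy → LinTy → LinTy
/-- Generic types: linear types or tree types. -/
inductive GenTy : Type where
  | lin : LinTy → GenTy
  | tree : TreeTy → GenTy
/-- Tree types: finite sequences of generic types. -/
inductive TreeTy : Type where
  | node : List GenTy → TreeTy
end

mutual
/-- Leaves of a generic type. -/
def GenTy.leaves : GenTy → List LinTy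
  | .lin A => [A]
  | .tree T => TreeTy.leaves T
  termination_by g => sizeOf g
/-- Leaves extraction on tree types. -/
def TreeTy.leaves : TreeTy → List LinTy
  | .node gs => gs.attach.flatMap (fun g => GenTy.leaves g.1)
  termination_by T => sizeOf T
  decreasing_by simp_wf; have := List.sizeOf_lt_of_mem g.2; omega
end

/-- Concatenation `⊎` of tree types (sequences). -/
def TreeTy.cat : TreeTy → TreeTy → TreeTy
  | .node a, .node b => .node (a ++ b)

mutual
/-- Weight (size) of a linear type, with parameter `X`. -/
def LinTy.weight (X : ℕ) : LinTy → ℕ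
  | .star => 0
  | .arr T A => max (TreeTy.weight X T) (LinTy.weight X A + 1)
  termination_by A => sizeOf A
def GenTy.weight (X : ℕ) : GenTy → ℕ
  | .lin A => LinTy.weight X A
  | .tree T => TreeTy.weight X T
  termination_by g => sizeOf g
def TreeTy.weight (X : ℕ) : TreeTy → ℕ
  | .node gs => X + (gs.attach.map (fun g => GenTy.weight X g.1)).foldr max 0
  termination_by T => sizeOf T
  decreasing_by simp_wf; have := List.sizeOf_lt_of_mem g.2; omega
end

mutual
/-- Hereditary absence of empty sequences (every leaf context ends in `⋆`). -/
inductive LinTy.Good : LinTy → Prop where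
  | star : LinTy.Good .star
  | arr {T A} : TreeTy.Good T → LinTy.Good A → LinTy.Good (.arr T A)
inductive GenTy.Good : GenTy → Prop where
  | lin {A} : LinTy.Good A → GenTy.Good (.lin A)
  | tree {T} : TreeTy.Good T → GenTy.Good (.tree T)
inductive TreeTy.Good : TreeTy → Prop where
  | node {gs : List GenTy} : gs ≠ [] → (∀ g ∈ gs, GenTy.Good g) → TreeTy.Good (.node gs)
end

/-! ## Leaf contexts -/

/-- One-hole contexts into tree types whose hole sits at a leaf position. -/
inductive LeafCtx : Type where
  | here (l r : List GenTy) : LeafCtx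
  | deeper (l : List GenTy) (L : LeafCtx) (r : List GenTy) : LeafCtx

/-- Plugging a linear type into a leaf context. -/
def LeafCtx.plug : LeafCtx → LinTy → TreeTy
  | .here l r, A => .node (l ++ .lin A :: r)
  | .deeper l L r, A => .node (l ++ .tree (L.plug A) :: r)

/-- Number of leaves strictly to the left of the hole. -/
def LeafCtx.holeIdx : LeafCtx → ℕ
  | .here l _ => (TreeTy.node l).leaves.length
  | .deeper l L _ => (TreeTy.node l).leaves.length + L.holeIdx

/-! ## Type contexts -/

mutual
/-- Linear type contexts: `𝕃c ::= ⟨·⟩ | T → 𝕃c | 𝕋 → A`. -/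
inductive LinCtx : Type where
  | hole : LinCtx
  | arrR : TreeTy → LinCtx → LinCtx
  | arrL : TreeCtx → LinTy → LinCtx
/-- Tree type contexts. -/
inductive TreeCtx : Type where
  | node : List GenTy → GenCtx → List GenTy → TreeCtx
/-- Generic type contexts. -/
inductive GenCtx : Type where
  | lin : LinCtx → GenCtx
  | tree : TreeCtx → GenCtx
end

mutual
def LinCtx.plug : LinCtx → LinTy → LinTy
  | .hole, B => B
  | .arrR T C, B => .arr T (C.plug B)
  | .arrL C A, B => .arr (C.plug B) A
def TreeCtx.plug : TreeCtx → LinTy → TreeTy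
  | .node l C r, B => .node (l ++ C.plug B :: r)
def GenCtx.plug : GenCtx → LinTy → GenTy
  | .lin C, B => .lin (C.plug B)
  | .tree C, B => .tree (C.plug B)
end

mutual
/-- Branch size of a linear type context. -/
def LinCtx.bsize (X : ℕ) : LinCtx → ℕ
  | .hole => 0
  | .arrR _ C => 1 + C.bsize X
  | .arrL C _ => C.bsize X
def TreeCtx.bsize (X : ℕ) : TreeCtx → ℕ
  | .node _ C _ => X + C.bsize X
def GenCtx.bsize (X : ℕ) : GenCtx → ℕ
  | .lin C => C.bsize X
  | .tree C => C.bsize X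
end

/-! # λ-terms (de Bruijn) and Closed Call-by-Name -/

inductive Term : Type where
  | var : ℕ → Term
  | lam : Term → Term
  | app : Term → Term → Term

/-- Shifting of free indices `≥ c` by `d`. -/
def Term.lift (d : ℕ) : ℕ → Term → Term
  | c, .var n => if n < c then .var n else .var (n + d)
  | c, .lam t => .lam (Term.lift d (c+1) t)
  | c, .app t u => .app (Term.lift d c t) (Term.lift d c u)

/-- Capture-avoiding substitution of `u` for index `k`. -/
def Term.subst (u : Term) : ℕ → Term → Term
  | k, .var n => if n = k then Term.lift k 0 u else if k < n then .var (n-1) else .var n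
  | k, .lam t => .lam (Term.subst u (k+1) t)
  | k, .app t s => .app (Term.subst u k t) (Term.subst u k s)

/-- `t{x₀ := u}`. -/
def Term.subst0 (t u : Term) : Term := Term.subst u 0 t

def Term.ClosedUnder : Term → ℕ → Prop
  | .var n, k => n < k
  | .lam t, k => t.ClosedUnder (k+1)
  | .app t u, k => t.ClosedUnder k ∧ u.ClosedUnder k

/-- Closed terms: no free variables. -/
def Term.Closed (t : Term) : Prop := t.ClosedUnder 0

/-- Occurrence of a free variable. -/
def Term.FreeIn : Term → ℕ → Prop
  | .var n, x => n = x
  | .lam t, x => t.FreeIn (x+1)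
  | .app t u, x => t.FreeIn x ∨ u.FreeIn x

/-- Weak head reduction `(λy.t)u r₁…r_h →wh t{y:=u} r₁…r_h`. -/
inductive Whr : Term → Term → Prop where
  | beta (t u : Term) : Whr (.app (.lam t) u) (t.subst0 u)
  | appL {t t' : Term} (u : Term) : Whr t t' → Whr (.app t u) (.app t' u)

/-- `n`-step weak head reduction. -/
inductive WhN : ℕ → Term → Term → Prop where
  | refl (t : Term) : WhN 0 t t
  | step {n t u v} : Whr t u → WhN n u v → WhN (n+1) t v

/-! # Type environments and the tree type system -/

/-- Type environments: maps from (de Bruijn) variables to tree types. -/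
def Env : Type := ℕ → TreeTy

def Env.empty : Env := fun _ => .node []

/-- Pointwise concatenation `Γ ⊎ Δ`. -/
def Env.union (Γ Δ : Env) : Env := fun x => (Γ x).cat (Δ x)

/-- Environment of the variable axiom: `x : [A]`. -/
def Env.single (x : ℕ) (A : LinTy) : Env :=
  fun y => if y = x then .node [.lin A] else .node []

/-- Environment extension `Γ, x₀:T` (de Bruijn cons). -/
def Env.cons (T : TreeTy) (Γ : Env) : Env
  | 0 => T
  | n+1 => Γ n

/-- Wrap a (non-empty) tree type in one extra sequence layer. -/
def TreeTy.wrap : TreeTy → TreeTy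
  | .node [] => .node []
  | T => .node [.tree T]

/-- `[Γ]`: wrap each (non-empty) type of the environment in one extra layer. -/
def Env.wrap (Γ : Env) : Env := fun x => (Γ x).wrap

/-- Finite union of environments. -/
def Env.unionF {n : ℕ} (Γs : Fin n → Env) : Env :=
  (List.ofFn Γs).foldr Env.union Env.empty

/-- Tree type derivations. -/
inductive Deriv : Env → Term → GenTy → Type where
  | var (x : ℕ) (A : LinTy) : Deriv (Env.single x A) (.var x) (.lin A)
  | lam {Γ : Env} {T : TreeTy} {t : Term} {A : LinTy} :
      Deriv (Env.cons T Γ) t (.lin A) → Deriv Γ (.lam t) (.lin (.arr T A))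
  | lamStar (t : Term) : Deriv Env.empty (.lam t) (.lin .star)
  | app {Γ Δ : Env} {t u : Term} {T : TreeTy} {A : LinTy} :
      Deriv Γ t (.lin (.arr T A)) → Deriv Δ u (.tree T) →
      Deriv (Env.union Γ Δ) (.app t u) (.lin A)
  | many {t : Term} (n : ℕ) (Γs : Fin n → Env) (Gs : Fin n → GenTy)
      (prems : ∀ i, Deriv (Γs i) t (Gs i)) :
      Deriv (Env.wrap (Env.unionF Γs)) t (.tree (.node (List.ofFn Gs)))
  | none (t : Term) : Deriv Env.empty t (.tree (.node []))

/-- Size of a derivation: number of rules that are not T-many/T-none. -/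
def Deriv.size : ∀ {Γ t G}, Deriv Γ t G → ℕ
  | _, _, _, .var _ _ => 1
  | _, _, _, .lam π => π.size + 1
  | _, _, _, .lamStar _ => 1
  | _, _, _, .app π ρ => π.size + ρ.size + 1
  | _, _, _, .many n _ _ prems => ∑ i : Fin n, (prems i).size
  | _, _, _, .none _ => 0

/-- Weight of a weighted derivation, with parameter `X`. -/
def Deriv.weight (X : ℕ) : ∀ {Γ t G}, Deriv Γ t G → ℕ
  | _, _, _, .var _ A => A.weight X
  | _, _, _, .lam (T := T) (A := A) π => max (π.weight X) (LinTy.weight X (.arr T A))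
  | _, _, _, .lamStar _ => 0
  | _, _, _, .app π ρ => max (π.weight X) (ρ.weight X)
  | _, _, _, .many n _ _ prems => X + (Finset.univ.sup fun i => (prems i).weight X)
  | _, _, _, .none _ => 0

/-- `SubD π n π'`: the judgment of `π'` occurs in `π`, crossing `n` T-many rules
descending from it to the root. -/
inductive SubD : ∀ {Γ t G}, Deriv Γ t G → ℕ → ∀ {Γ' u G'}, Deriv Γ' u G' → Prop where
  | refl {Γ t G} (π : Deriv Γ t G) : SubD π 0 π
  | lam {Γ T t A} {π : Deriv (Env.cons T Γ) t (.lin A)} {n} {Γ' u G'} {π' : Deriv Γ' u G'} :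
      SubD π n π' → SubD (Deriv.lam π) n π'
  | appL {Γ Δ t u T A} {π : Deriv Γ t (.lin (.arr T A))} {ρ : Deriv Δ u (.tree T)}
      {n} {Γ' v G'} {π' : Deriv Γ' v G'} :
      SubD π n π' → SubD (Deriv.app π ρ) n π'
  | appR {Γ Δ t u T A} {π : Deriv Γ t (.lin (.arr T A))} {ρ : Deriv Δ u (.tree T)}
      {n} {Γ' v G'} {π' : Deriv Γ' v G'} :
      SubD ρ n π' → SubD (Deriv.app π ρ) n π'
  | many {t k} {Γs : Fin k → Env} {Gs : Fin k → GenTy} {prems : ∀ i, Deriv (Γs i) t (Gs i)}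
      (i : Fin k) {n} {Γ' u G'} {π' : Deriv Γ' u G'} :
      SubD (prems i) n π' → SubD (Deriv.many k Γs Gs prems) (n+1) π'

/-! ## Auxiliary lemmas for subject expansion -/

theorem cat_nilR (T : TreeTy) : T.cat (.node []) = T := by
  cases T with | node gs => simp [TreeTy.cat]

theorem cat_eq_nil {T S : TreeTy} (h : T.cat S = .node []) :
    T = .node [] ∧ S = .node [] := by
  cases T with | node a =>
  cases S with | node b =>
  simp only [TreeTy.cat, TreeTy.node.injEq, List.append_eq_nil_iff] at h
  exact ⟨congrArg _ h.1, congrArg _ h.2⟩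

theorem wrap_eq_nil {T : TreeTy} (h : T.wrap = .node []) : T = .node [] := by
  cases T with | node gs =>
  cases gs with
  | nil => rfl
  | cons g gs => simp [TreeTy.wrap] at h

theorem empty_union (Γ : Env) : Env.union Env.empty Γ = Γ := by
  funext x
  show (TreeTy.node []).cat (Γ x) = Γ x
  cases h : Γ x with | node gs => simp [TreeTy.cat]

theorem union_empty_empty : Env.union Env.empty Env.empty = Env.empty := empty_union _

theorem union_eq_empty {Γ Δ : Env} (h : Env.union Γ Δ = Env.empty) :
    Γ = Env.empty ∧ Δ = Env.empty := by
  constructor <;> funext x <;>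
    [exact (cat_eq_nil (congrFun h x)).1; exact (cat_eq_nil (congrFun h x)).2]

theorem wrap_empty : Env.wrap Env.empty = Env.empty := rfl

theorem wrap_eq_empty {Γ : Env} (h : Env.wrap Γ = Env.empty) : Γ = Env.empty :=
  funext fun x => wrap_eq_nil (congrFun h x)

theorem unionF_zero (Γs : Fin 0 → Env) : Env.unionF Γs = Env.empty := by
  simp [Env.unionF]

theorem unionF_succ {n} (Γs : Fin (n+1) → Env) :
    Env.unionF Γs = Env.union (Γs 0) (Env.unionF (fun i => Γs i.succ)) := by
  simp [Env.unionF, List.ofFn_succ]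

theorem unionF_eq_empty : ∀ {n} {Γs : Fin n → Env}, Env.unionF Γs = Env.empty →
    ∀ i, Γs i = Env.empty := by
  intro n
  induction n with
  | zero => intro Γs _ i; exact i.elim0
  | succ m ih =>
    intro Γs h i
    rw [unionF_succ] at h
    obtain ⟨h1, h2⟩ := union_eq_empty h
    refine Fin.cases h1 (fun j => ih h2 j) i

theorem unionF_const_empty (n : ℕ) : Env.unionF (fun _ : Fin n => Env.empty) = Env.empty := by
  induction n with
  | zero => exact unionF_zero _
  | succ m ih => rw [unionF_succ]; rw [ih]; exact union_empty_empty

theorem unionF_apply_nil {n} {Γs : Fin n → Env} {x : ℕ}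
    (h : ∀ i, Γs i x = .node []) : Env.unionF Γs x = .node [] := by
  induction n with
  | zero => rfl
  | succ m ih =>
    rw [unionF_succ]
    show (Γs 0 x).cat _ = _
    rw [h 0, ih (fun i => h i.succ)]
    rfl

/-- Insertion of a type at position `k` in an environment (de Bruijn). -/
def Env.insert (k : ℕ) (T : TreeTy) (Γ : Env) : Env :=
  fun x => if x < k then Γ x else if x = k then T else Γ (x - 1)

theorem insert_zero (T : TreeTy) (Γ : Env) : Env.insert 0 T Γ = Env.cons T Γ := by
  funext x
  cases x with
  | zero => rfl
  | succ n => simp [Env.insert, Env.cons]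

theorem insert_succ_cons (k : ℕ) (T S : TreeTy) (Γ : Env) :
    Env.insert (k+1) T (Env.cons S Γ) = Env.cons S (Env.insert k T Γ) := by
  funext x
  cases x with
  | zero => simp [Env.insert, Env.cons]
  | succ n =>
    show (if n+1 < k+1 then Env.cons S Γ (n+1) else if n+1 = k+1 then T
      else Env.cons S Γ (n+1-1)) = (if n < k then Γ n else if n = k then T else Γ (n-1))
    rcases lt_trichotomy n k with h|h|h
    · rw [if_pos (by omega), if_pos h]; rfl
    · subst h; rw [if_neg (by omega), if_pos rfl, if_neg (by omega), if_pos rfl]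
    · rw [if_neg (by omega), if_neg (by omega), if_neg (by omega), if_neg (by omega)]
      obtain ⟨m, rfl⟩ : ∃ m, n = m + 1 := ⟨n - 1, by omega⟩
      rfl

theorem insert_nil_empty (k : ℕ) : Env.insert k (.node []) Env.empty = Env.empty := by
  funext x
  simp only [Env.insert]
  split_ifs <;> rfl

theorem insert_single_lt {x k : ℕ} (h : x < k) (A : LinTy) :
    Env.insert k (.node []) (Env.single x A) = Env.single x A := by
  funext y
  simp only [Env.insert, Env.single]
  split_ifs <;> first | rfl | omega

theorem insert_single_ge {x k : ℕ} (h : k ≤ x) (A : LinTy) :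
    Env.insert k (.node []) (Env.single x A) = Env.single (x+1) A := by
  funext y
  simp only [Env.insert, Env.single]
  split_ifs <;> first | rfl | omega

theorem insert_single_self (k : ℕ) (A : LinTy) :
    Env.insert k (.node [.lin A]) Env.empty = Env.single k A := by
  funext y
  simp only [Env.insert, Env.single]
  split_ifs <;> first | rfl | omega

theorem union_insert (k : ℕ) (T₁ T₂ : TreeTy) (Γ Δ : Env) :
    Env.union (Env.insert k T₁ Γ) (Env.insert k T₂ Δ)
      = Env.insert k (T₁.cat T₂) (Env.union Γ Δ) := by
  funext x
  show (Env.insert k T₁ Γ x).cat (Env.insert k T₂ Δ x) = _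
  simp only [Env.insert]
  split_ifs <;> rfl

theorem wrap_insert (k : ℕ) (T : TreeTy) (Γ : Env) :
    Env.wrap (Env.insert k T Γ) = Env.insert k T.wrap (Env.wrap Γ) := by
  funext x
  show (Env.insert k T Γ x).wrap = _
  simp only [Env.insert]
  split_ifs <;> rfl

/-- Concatenation of a finite family of tree types. -/
def TreeTy.catF {n : ℕ} (Ts : Fin n → TreeTy) : TreeTy :=
  (List.ofFn Ts).foldr TreeTy.cat (.node [])

theorem catF_succ {n} (Ts : Fin (n+1) → TreeTy) :
    TreeTy.catF Ts = (Ts 0).cat (TreeTy.catF fun i => Ts i.succ) := by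
  simp [TreeTy.catF, List.ofFn_succ]

theorem unionF_insert {n} (k : ℕ) (Ts : Fin n → TreeTy) (Γs : Fin n → Env) :
    Env.unionF (fun i => Env.insert k (Ts i) (Γs i))
      = Env.insert k (TreeTy.catF Ts) (Env.unionF Γs) := by
  induction n with
  | zero => rw [unionF_zero, unionF_zero]; exact (insert_nil_empty k).symm
  | succ m ih =>
    rw [unionF_succ, unionF_succ Γs, ih, union_insert, catF_succ]

/-- Cast a derivation along an environment equality. -/
def Deriv.castEnv {Γ Δ : Env} {t G} (h : Γ = Δ) (π : Deriv Γ t G) : Deriv Δ t G := h ▸ π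

theorem deriv_support {Γ t G} (π : Deriv Γ t G) :
    ∀ k, t.ClosedUnder k → ∀ x, k ≤ x → Γ x = .node [] := by
  induction π with
  | var y A =>
    intro k hc x hx
    simp only [Term.ClosedUnder] at hc
    show Env.single y A x = _
    rw [Env.single, if_neg (by omega)]
  | lam π ih =>
    intro k hc x hx
    simp only [Term.ClosedUnder] at hc
    exact ih (k+1) hc (x+1) (by omega)
  | lamStar t => intro _ _ _ _; rfl
  | app π ρ ih1 ih2 =>
    intro k hc x hx
    obtain ⟨h1, h2⟩ := hc
    show (_root_.Env.union _ _) x = _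
    show TreeTy.cat _ _ = _
    rw [ih1 k h1 x hx, ih2 k h2 x hx]
    rfl
  | many n Γs Gs prems ih =>
    intro k hc x hx
    show (Env.unionF Γs x).wrap = _
    rw [unionF_apply_nil (fun i => ih i k hc x hx)]
    rfl
  | none t => intro _ _ _ _; rfl

theorem deriv_closed_env {Γ t G} (π : Deriv Γ t G) (h : t.Closed) : Γ = Env.empty :=
  funext fun x => deriv_support π 0 h x (Nat.zero_le x)

theorem tree_intro (u : Term) (gs : List GenTy)
    (h : ∀ g ∈ gs, Nonempty (Deriv Env.empty u g)) :
    Nonempty (Deriv Env.empty u (.tree (.node gs))) := by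
  have prems : ∀ i : Fin gs.length, Deriv Env.empty u (gs.get i) :=
    fun i => (h _ (gs.get_mem i)).some
  refine ⟨?_⟩
  have d := Deriv.many gs.length (fun _ => Env.empty) (fun i => gs.get i) prems
  rw [unionF_const_empty, wrap_empty] at d
  rw [show List.ofFn (fun i => gs.get i) = gs from List.ofFn_get gs] at d
  exact d

theorem tree_inv {u : Term} {gs : List GenTy}
    (π : Deriv Env.empty u (.tree (.node gs))) :
    ∀ g ∈ gs, Nonempty (Deriv Env.empty u g) := by
  have main : ∀ {Γ G} (π : Deriv Γ u G), Γ = Env.empty → G = .tree (.node gs) →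
      ∀ g ∈ gs, Nonempty (Deriv Env.empty u g) := by
    intro Γ G π
    cases π with
    | var x A => intro _ hG; exact absurd hG (by simp)
    | lam π => intro _ hG; exact absurd hG (by simp)
    | lamStar t => intro _ hG; exact absurd hG (by simp)
    | app π ρ => intro _ hG; exact absurd hG (by simp)
    | many n Γs Gs prems =>
      intro hΓ hG g hg
      have hGs : List.ofFn Gs = gs := by
        injection hG with h; injection h
      have hempty : ∀ i, Γs i = Env.empty :=
        unionF_eq_empty (wrap_eq_empty hΓ)
      rw [← hGs] at hg
      obtain ⟨i, rfl⟩ := List.mem_ofFn.mp hg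
      exact ⟨(prems i).castEnv (hempty i)⟩
    | none t =>
      intro _ hG g hg
      injection hG with h; injection h with h
      rw [← h] at hg; simp at hg
  exact main π rfl rfl

theorem cat_combine {u : Term} {T₁ T₂ : TreeTy}
    (π₁ : Deriv Env.empty u (.tree T₁)) (π₂ : Deriv Env.empty u (.tree T₂)) :
    Nonempty (Deriv Env.empty u (.tree (T₁.cat T₂))) := by
  cases T₁ with | node a =>
  cases T₂ with | node b =>
  show Nonempty (Deriv Env.empty u (.tree (.node (a ++ b))))
  apply tree_intro
  intro g hg
  rcases List.mem_append.mp hg with h | h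
  · exact tree_inv π₁ g h
  · exact tree_inv π₂ g h

theorem catF_combine {u : Term} : ∀ {n} {Ts : Fin n → TreeTy},
    (∀ i, Nonempty (Deriv Env.empty u (.tree (Ts i)))) →
    Nonempty (Deriv Env.empty u (.tree (TreeTy.catF Ts))) := by
  intro n
  induction n with
  | zero => intro Ts _; exact ⟨Deriv.none u⟩
  | succ m ih =>
    intro Ts h
    rw [catF_succ]
    exact cat_combine (h 0).some (ih (fun i => h i.succ)).some

theorem wrap_combine {u : Term} {T : TreeTy} (π : Deriv Env.empty u (.tree T)) :
    Nonempty (Deriv Env.empty u (.tree T.wrap)) := by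
  cases T with | node gs =>
  cases gs with
  | nil => exact ⟨Deriv.none u⟩
  | cons g gs =>
    show Nonempty (Deriv Env.empty u (.tree (.node [.tree (.node (g :: gs))])))
    apply tree_intro
    intro g' hg'
    simp only [List.mem_singleton] at hg'
    subst hg'
    exact ⟨π⟩

theorem lift_closedUnder : ∀ (t : Term) (c d : ℕ), t.ClosedUnder c → Term.lift d c t = t := by
  intro t
  induction t with
  | var n => intro c d h; simp only [Term.ClosedUnder] at h; simp [Term.lift, h]
  | lam t ih =>
    intro c d h
    simp only [Term.ClosedUnder] at h
    simp [Term.lift, ih _ _ h]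
  | app t s iht ihs =>
    intro c d h
    obtain ⟨h1, h2⟩ := h
    simp [Term.lift, iht _ _ h1, ihs _ _ h2]

theorem var_self_lin {u : Term} {A : LinTy} (π : Deriv Env.empty u (.lin A)) (k : ℕ) :
    Nonempty (Deriv (Env.insert k (.node [.lin A]) Env.empty) (.var k) (.lin A)) ∧
    Nonempty (Deriv Env.empty u (.tree (.node [.lin A]))) := by
  constructor
  · exact ⟨(Deriv.var k A).castEnv (insert_single_self k A).symm⟩
  · refine ⟨?_⟩
    have d := Deriv.many 1 (fun _ : Fin 1 => Env.empty) (fun _ => .lin A) (fun _ => π)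
    rw [unionF_const_empty, wrap_empty] at d
    rw [show List.ofFn (fun _ : Fin 1 => GenTy.lin A) = [.lin A] by simp] at d
    exact d

theorem var_self {u : Term} : ∀ {Γ G} (π : Deriv Γ u G), u.Closed → ∀ k : ℕ,
    ∃ T, Nonempty (Deriv (Env.insert k T Γ) (.var k) G) ∧
      Nonempty (Deriv Env.empty u (.tree T)) := by
  intro Γ G π
  induction π with
  | var x A =>
    intro hu
    exact absurd hu (by simp [Term.Closed, Term.ClosedUnder])
  | lam π ih =>
    intro hu k
    rename_i Γ' T t A
    have hΓ : Γ' = Env.empty := deriv_closed_env (Deriv.lam π) hu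
    subst hΓ
    exact ⟨_, var_self_lin (Deriv.lam π) k⟩
  | lamStar t =>
    intro hu k
    exact ⟨_, var_self_lin (Deriv.lamStar t) k⟩
  | app π ρ ih1 ih2 =>
    intro hu k
    have hΓ := deriv_closed_env (Deriv.app π ρ) hu
    rw [hΓ]
    exact ⟨_, var_self_lin ((Deriv.app π ρ).castEnv hΓ) k⟩
  | many n Γs Gs prems ih =>
    intro hu k
    choose Ts h1 h2 using fun i => ih i hu k
    refine ⟨(TreeTy.catF Ts).wrap, ⟨?_⟩, ?_⟩
    · have d := Deriv.many n (fun i => Env.insert k (Ts i) (Γs i)) Gs (fun i => (h1 i).some)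
      rw [unionF_insert, wrap_insert] at d
      exact d
    · exact wrap_combine (catF_combine h2).some
  | none t =>
    intro hu k
    exact ⟨.node [], ⟨(Deriv.none (.var k)).castEnv (insert_nil_empty k).symm⟩, ⟨Deriv.none _⟩⟩

/-- A closed term substituted for a variable of itself. -/
theorem subst_var_self {u : Term} (hu : u.Closed) (k : ℕ) :
    Term.subst u k (.var k) = u := by
  simp [Term.subst, lift_closedUnder u 0 k hu]

/-- Anti-substitution. -/
theorem antisubst {u : Term} (hu : u.Closed) : ∀ {Γ w G} (π : Deriv Γ w G)
    (s : Term) (k : ℕ), Term.subst u k s = w →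
    ∃ T, Nonempty (Deriv (Env.insert k T Γ) s G) ∧
      Nonempty (Deriv Env.empty u (.tree T)) := by
  intro Γ w G π
  induction π with
  | var x A =>
    intro s k hs
    cases s with
    | var n =>
      by_cases hnk : n = k
      · subst hnk
        rw [subst_var_self hu] at hs
        subst hs
        exact absurd hu (by simp [Term.Closed, Term.ClosedUnder])
      · by_cases hkn : k < n
        · rw [Term.subst, if_neg hnk, if_pos hkn] at hs
          injection hs with hx
          have hn : n = x + 1 := by omega
          subst hn
          refine ⟨.node [], ⟨?_⟩, ⟨Deriv.none u⟩⟩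
          exact (Deriv.var (x+1) A).castEnv (insert_single_ge (by omega) A).symm
        · rw [Term.subst, if_neg hnk, if_neg hkn] at hs
          injection hs with hx
          subst hx
          refine ⟨.node [], ⟨?_⟩, ⟨Deriv.none u⟩⟩
          exact (Deriv.var n A).castEnv (insert_single_lt (by omega) A).symm
    | lam s₀ => exact absurd hs (by simp [Term.subst])
    | app s₁ s₂ => exact absurd hs (by simp [Term.subst])
  | lam π ih =>
    rename_i Γ' T₀ t₀ A₀
    intro s k hs
    cases s with
    | var n =>
      by_cases hnk : n = k
      · subst hnk
        rw [subst_var_self hu] at hs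
        subst hs
        have hΓ : Γ' = Env.empty := deriv_closed_env (Deriv.lam π) hu
        subst hΓ
        exact ⟨_, var_self_lin (Deriv.lam π) n⟩
      · by_cases hkn : k < n <;>
          · rw [Term.subst, if_neg hnk] at hs
            first
            | (rw [if_pos hkn] at hs; exact absurd hs (by simp))
            | (rw [if_neg hkn] at hs; exact absurd hs (by simp))
    | lam s₀ =>
      rw [Term.subst] at hs
      injection hs with hs
      obtain ⟨T, ⟨d1⟩, hd2⟩ := ih s₀ (k+1) hs
      exact ⟨T, ⟨Deriv.lam (d1.castEnv (insert_succ_cons k T T₀ Γ'))⟩, hd2⟩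
    | app s₁ s₂ => exact absurd hs (by simp [Term.subst])
  | lamStar t₀ =>
    intro s k hs
    cases s with
    | var n =>
      by_cases hnk : n = k
      · subst hnk
        rw [subst_var_self hu] at hs
        subst hs
        exact ⟨_, var_self_lin (Deriv.lamStar t₀) n⟩
      · by_cases hkn : k < n <;>
          · rw [Term.subst, if_neg hnk] at hs
            first
            | (rw [if_pos hkn] at hs; exact absurd hs (by simp))
            | (rw [if_neg hkn] at hs; exact absurd hs (by simp))
    | lam s₀ =>
      refine ⟨.node [], ⟨?_⟩, ⟨Deriv.none u⟩⟩
      exact (Deriv.lamStar s₀).castEnv (insert_nil_empty k).symm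
    | app s₁ s₂ => exact absurd hs (by simp [Term.subst])
  | app π ρ ih1 ih2 =>
    rename_i Γ₁ Γ₂ t₁ t₂ T₀ A₀
    intro s k hs
    cases s with
    | var n =>
      by_cases hnk : n = k
      · subst hnk
        rw [subst_var_self hu] at hs
        subst hs
        have hΓ := deriv_closed_env (Deriv.app π ρ) hu
        rw [hΓ]
        exact ⟨_, var_self_lin ((Deriv.app π ρ).castEnv hΓ) n⟩
      · by_cases hkn : k < n <;>
          · rw [Term.subst, if_neg hnk] at hs
            first
            | (rw [if_pos hkn] at hs; exact absurd hs (by simp))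
            | (rw [if_neg hkn] at hs; exact absurd hs (by simp))
    | lam s₀ => exact absurd hs (by simp [Term.subst])
    | app s₁ s₂ =>
      rw [Term.subst] at hs
      injection hs with hs1 hs2
      obtain ⟨T₁, ⟨d1⟩, ⟨e1⟩⟩ := ih1 s₁ k hs1
      obtain ⟨T₂, ⟨d2⟩, ⟨e2⟩⟩ := ih2 s₂ k hs2
      refine ⟨T₁.cat T₂, ⟨?_⟩, cat_combine e1 e2⟩
      exact (Deriv.app d1 d2).castEnv (union_insert k T₁ T₂ Γ₁ Γ₂)
  | many n Γs Gs prems ih =>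
    intro s k hs
    choose Ts h1 h2 using fun i => ih i s k hs
    refine ⟨(TreeTy.catF Ts).wrap, ⟨?_⟩, wrap_combine (catF_combine h2).some⟩
    have d := Deriv.many n (fun i => Env.insert k (Ts i) (Γs i)) Gs (fun i => (h1 i).some)
    rw [unionF_insert, wrap_insert] at d
    exact d
  | none t₀ =>
    intro s k hs
    exact ⟨.node [], ⟨(Deriv.none s).castEnv (insert_nil_empty k).symm⟩, ⟨Deriv.none u⟩⟩

theorem subject_expansion_aux {t u : Term} (hr : Whr t u) :
    ∀ (_ : t.Closed) (A : LinTy) (_ : Deriv Env.empty u (.lin A)),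
      Nonempty (Deriv Env.empty t (.lin A)) := by
  induction hr with
  | beta s r =>
    intro hc A π
    have h1 : (Term.lam s).ClosedUnder 0 ∧ r.Closed := hc
    obtain ⟨T, ⟨d1⟩, ⟨d2⟩⟩ := antisubst h1.2 π s 0 rfl
    have dlam : Deriv Env.empty (.lam s) (.lin (.arr T A)) :=
      Deriv.lam (d1.castEnv (insert_zero T Env.empty))
    exact ⟨(Deriv.app dlam d2).castEnv union_empty_empty⟩
  | appL v hr ih =>
    rename_i t₁ t₁'
    intro hc A π
    have main : ∀ {Γ G} (π : Deriv Γ (Term.app t₁' v) G), Γ = Env.empty → G = .lin A →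
        Nonempty (Deriv Env.empty (.app t₁ v) (.lin A)) := by
      intro Γ G π
      cases π with
      | app π₁ ρ =>
        intro hΓ hG
        rename_i Γ₁ Γ₂ T₀ A₀
        obtain ⟨h1, h2⟩ := union_eq_empty hΓ
        injection hG with hA
        subst hA
        have hc1 : t₁.Closed ∧ v.Closed := hc
        obtain ⟨d1⟩ := ih hc1.1 _ (π₁.castEnv h1)
        exact ⟨(Deriv.app d1 (ρ.castEnv h2)).castEnv union_empty_empty⟩
      | many n Γs Gs prems => intro _ hG; exact absurd hG (by simp)
      | none => intro _ hG; exact absurd hG (by simp)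
    exact main π rfl rfl

/-- subject expansion. -/
theorem subject_expansion {t u : Term} {A : LinTy}
    (hc : t.Closed) (hr : Whr t u) (π : Deriv Env.empty u (.lin A)) :
    Nonempty (Deriv Env.empty t (.lin A)) :=
  subject_expansion_aux hr hc A π
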